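/- Let T be a bounded linear operator on a Banach space X and let (x*_n)_{n∈ℤ} be a bounded complete trajectory for T*. With h defined as the discrete Carleman transform (h(z) = Σ_{n≥0} z^{−n−1} x*_n for |z| > 1, h(z) = −Σ_{n≥1} z^{n−1} x*_{−n} for |z| < 1), the identity h(w) − h(z) = (z − w)² (zI − T*)^{−2} h(w) + (z − w)(zI − T*)^{−2} x*_0 holds for all w, z with |w| < 1 < |z| and z in the resolvent set of T*. -/

import Mathlib

open Filter Topology

set_option maxHeartbeats 1000000 in
/-- The resolvent identity for the discrete Carleman transform of a bounded complete
trajectory of `T*`: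
`h(w) - h(z) = (z-w)^2 (zI - T*)⁻² h(w) + (z-w)(zI - T*)⁻² x₀*`. -/
theorem stmt9 {X : Type*} [NormedAddCommGroup X] [NormedSpace ℂ X] [CompleteSpace X]
    (T : X →L[ℂ] X) (Tstar : (X →L[ℂ] ℂ) →L[ℂ] (X →L[ℂ] ℂ))
    (hTstar : ∀ (f : X →L[ℂ] ℂ) (x : X), Tstar f x = f (T x))
    (xs : ℤ → (X →L[ℂ] ℂ)) (M : ℝ) (hM : ∀ n : ℤ, ‖xs n‖ ≤ M)
    (htraj : ∀ n : ℤ, Tstar (xs n) = xs (n + 1))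
    (w z : ℂ) (hw : ‖w‖ < 1) (hz : 1 < ‖z‖)
    (hres : z ∈ resolventSet ℂ Tstar)
    (R : (X →L[ℂ] ℂ) →L[ℂ] (X →L[ℂ] ℂ))
    (hR : R = Ring.inverse (@algebraMap ℂ ((X →L[ℂ] ℂ) →L[ℂ] (X →L[ℂ] ℂ)) _ ContinuousLinearMap.semiring _ z - Tstar)) :
    (-∑' n : ℕ, w ^ n • xs (-(n + 1) : ℤ)) - (∑' n : ℕ, (z ^ (n + 1))⁻¹ • xs n) =
      (z - w) ^ 2 • (R * R) (-∑' n : ℕ, w ^ n • xs (-(n + 1) : ℤ)) +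
        (z - w) • (R * R) (xs 0) := by
  have hM0 : 0 ≤ M := (norm_nonneg _).trans (hM 0)
  have hz0 : z ≠ 0 := by
    intro h; rw [h] at hz; simp at hz; linarith
  have hrz : ‖z‖⁻¹ < 1 := by
    rw [inv_lt_one_iff₀]; right; exact hz
  have hrz0 : (0:ℝ) ≤ ‖z‖⁻¹ := by positivity
  -- summability
  have geoW : Summable (fun n : ℕ => ‖w‖ ^ n * M) :=
    (summable_geometric_of_lt_one (norm_nonneg w) hw).mul_right M
  have geoZ : Summable (fun n : ℕ => ‖z‖⁻¹ ^ n * M) :=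
    (summable_geometric_of_lt_one hrz0 hrz).mul_right M
  have bw : ∀ (k : ℕ → ℤ) (n : ℕ), ‖w ^ n • xs (k n)‖ ≤ ‖w‖ ^ n * M := by
    intro k n
    have h0 : ‖w ^ n • xs (k n)‖ ≤ ‖w ^ n‖ * ‖xs (k n)‖ := by
      have := norm_smul_le (w ^ n) (xs (k n)); simpa using this
    refine h0.trans ?_
    rw [norm_pow]
    exact mul_le_mul_of_nonneg_left (hM _) (by positivity)
  have hSw : Summable (fun n : ℕ => w ^ n • xs (-(n + 1) : ℤ)) :=
    Summable.of_norm_bounded geoW (bw _)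
  have hSw' : Summable (fun n : ℕ => w ^ n • xs (-n : ℤ)) :=
    Summable.of_norm_bounded geoW (bw _)
  have hSz : Summable (fun n : ℕ => (z ^ (n + 1))⁻¹ • xs n) := by
    refine Summable.of_norm_bounded geoZ fun n => ?_
    have h0 : ‖(z ^ (n + 1))⁻¹ • xs (n : ℤ)‖ ≤ ‖(z ^ (n + 1))⁻¹‖ * ‖xs (n : ℤ)‖ := by
      have := norm_smul_le ((z ^ (n + 1))⁻¹) (xs (n : ℤ)); simpa using this
    refine h0.trans ?_
    apply mul_le_mul _ (hM _) (norm_nonneg _) (by positivity)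
    rw [norm_inv, norm_pow, ← inv_pow]
    exact pow_le_pow_of_le_one hrz0 hrz.le (Nat.le_succ n)
  have hSz' : Summable (fun n : ℕ => (z ^ n)⁻¹ • xs n) := by
    refine Summable.of_norm_bounded geoZ fun n => ?_
    have h0 : ‖(z ^ n)⁻¹ • xs (n : ℤ)‖ ≤ ‖(z ^ n)⁻¹‖ * ‖xs (n : ℤ)‖ := by
      have := norm_smul_le ((z ^ n)⁻¹) (xs (n : ℤ)); simpa using this
    refine h0.trans ?_
    rw [norm_inv, norm_pow, ← inv_pow]
    exact mul_le_mul_of_nonneg_left (hM _) (by positivity)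
  -- abbreviations
  set S := ∑' n : ℕ, w ^ n • xs (-(n + 1) : ℤ) with hSdef
  set Hz := ∑' n : ℕ, (z ^ (n + 1))⁻¹ • xs (n : ℤ) with hHzdef
  set A := @algebraMap ℂ ((X →L[ℂ] ℂ) →L[ℂ] (X →L[ℂ] ℂ)) _ ContinuousLinearMap.semiring _ z - Tstar with hA
  have hAapp : ∀ f : X →L[ℂ] ℂ, A f = z • f - Tstar f := by
    intro f
    rw [hA, ContinuousLinearMap.sub_apply, ContinuousLinearMap.algebraMap_apply]
  have hRA : ∀ f : X →L[ℂ] ℂ, R (A f) = f := by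
    intro f
    have h1 : R * A = 1 := by subst hR; exact Ring.inverse_mul_cancel _ hres
    have h2 := congrArg (fun g : (X →L[ℂ] ℂ) →L[ℂ] (X →L[ℂ] ℂ) => g f) h1
    simpa [ContinuousLinearMap.mul_apply] using h2
  -- T* S = xs 0 + w • S
  have hTW : Tstar S = xs 0 + w • S := by
    have e1 : Tstar S = ∑' n : ℕ, w ^ n • xs (-n : ℤ) := by
      rw [hSdef, ← (hSw.hasSum.mapL Tstar).tsum_eq]
      apply tsum_congr; intro n
      have h3 : Tstar (xs (-(n + 1) : ℤ)) = xs (-n : ℤ) := by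
        rw [htraj]; congr 1; ring
      simp only [map_smul]
      rw [h3]
    have h7 : ∑' n : ℕ, w ^ (n + 1) • xs (-((n + 1 : ℕ) : ℤ)) = w • S := by
      rw [hSdef, ← (hSw.hasSum.const_smul w).tsum_eq]
      apply tsum_congr; intro n
      rw [smul_smul, ← pow_succ']
      norm_cast
    rw [e1, Summable.tsum_eq_zero_add hSw', h7]
    norm_num
  -- A Hz = xs 0
  have eHz : A Hz = xs 0 := by
    have e3 : z • Hz = ∑' n : ℕ, (z ^ n)⁻¹ • xs (n : ℤ) := by
      rw [hHzdef, ← (hSz.hasSum.const_smul z).tsum_eq]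
      apply tsum_congr; intro n
      rw [smul_smul]
      congr 1
      field_simp
      ring
    have e4 : Tstar Hz = ∑' n : ℕ, (z ^ (n + 1))⁻¹ • xs ((n : ℤ) + 1) := by
      rw [hHzdef, ← (hSz.hasSum.mapL Tstar).tsum_eq]
      apply tsum_congr; intro n
      simp [htraj]
    have e5 : ∑' n : ℕ, (z ^ n)⁻¹ • xs (n : ℤ) =
        xs 0 + ∑' n : ℕ, (z ^ (n + 1))⁻¹ • xs ((n : ℤ) + 1) := by
      rw [Summable.tsum_eq_zero_add hSz']
      have h8 : ∑' n : ℕ, (z ^ (n + 1))⁻¹ • xs (((n + 1 : ℕ)) : ℤ) =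
          ∑' n : ℕ, (z ^ (n + 1))⁻¹ • xs ((n : ℤ) + 1) := by
        apply tsum_congr; intro n
        norm_cast
      rw [h8]
      norm_num
    rw [hAapp, e3, e4, e5]
    abel
  -- A (-S) = (z - w) • (-S) + xs 0
  have eS : A (-S) = (z - w) • (-S) + xs 0 := by
    rw [hAapp, map_neg, hTW]
    module
  have E1 : -S = (z - w) • R (-S) + R (xs 0) := by
    have h5 := hRA (-S)
    rw [eS, map_add, map_smul] at h5
    exact h5.symm
  have E2 : R (-S) = (z - w) • R (R (-S)) + R (R (xs 0)) := by
    conv_lhs => rw [E1]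
    rw [map_add, map_smul]
  have E3 : Hz = R (xs 0) := by
    have h6 := hRA Hz
    rw [eHz] at h6
    exact h6.symm
  simp only [ContinuousLinearMap.mul_apply]
  rw [E3]
  calc -S - R (xs 0) = (z - w) • R (-S) := by
        conv_lhs => rw [E1]
        abel
    _ = (z - w) • ((z - w) • R (R (-S)) + R (R (xs 0))) := by conv_lhs => rw [E2]
    _ = (z - w) ^ 2 • R (R (-S)) + (z - w) • R (R (xs 0)) := by module
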